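/- Let H be a Hilbert space, L symmetric with −⟨Lf,f⟩ ≥ λ_m‖(1−Π)f‖² (microscopic coercivity), T skew-symmetric with ‖TΠf‖² ≥ λ_M‖Πf‖² (macroscopic coercivity), ΠTΠ = 0, and assume the operators AT(1−Π) and AL are bounded with ‖AT(1−Π)f‖ + ‖ALf‖ ≤ C_M‖(1−Π)f‖, where A := (1+(TΠ)*(TΠ))^{-1}(TΠ)*. Then there exist explicit constants λ > 0 and C ≥ 1, depending only on λ_m, λ_M, C_M, such that ‖e^{t(L−T)} f_I‖ ≤ C e^{−λt} ‖f_I‖ for all f_I in H and all t ≥ 0. -/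

import Mathlib

open scoped RealInnerProductSpace
open ContinuousLinearMap

/-- Auxiliary purely real quadratic-form estimate used in the hypocoercivity proof. -/
private lemma quad_aux (lam_m C_M k ε X Y : ℝ) (hk0 : 0 < k) (hk1 : k ≤ 1)
    (hε0 : 0 < ε) (hεb : ε * (k + 2 * C_M ^ 2) ≤ lam_m * k / 2)
    (hX : 0 ≤ X) (hY : 0 ≤ Y) :
    -(lam_m * X ^ 2) + ε * (C_M * X * Y - k * Y ^ 2 + C_M * X * Y + X ^ 2)
      ≤ -(ε * k / 2) * (X ^ 2 + Y ^ 2) := by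
  have hkG : k * (-(lam_m * X ^ 2) + ε * (C_M * X * Y - k * Y ^ 2 + C_M * X * Y + X ^ 2)
      + (ε * k / 2) * (X ^ 2 + Y ^ 2)) ≤ k * 0 := by
    have h1 : 0 ≤ ε * (k * Y - 2 * C_M * X) ^ 2 :=
      mul_nonneg hε0.le (sq_nonneg _)
    have h2 : 0 ≤ (lam_m * k / 2 - ε * (k + 2 * C_M ^ 2)) * X ^ 2 :=
      mul_nonneg (by linarith) (sq_nonneg X)
    have h3 : 0 ≤ (1 - k) * (ε * k * X ^ 2) :=
      mul_nonneg (by linarith) (mul_nonneg (mul_nonneg hε0.le hk0.le) (sq_nonneg X))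
    have h4 : 0 ≤ ε * k := mul_nonneg hε0.le hk0.le
    have h5 : 0 ≤ ε * C_M ^ 2 * X ^ 2 :=
      mul_nonneg (mul_nonneg hε0.le (sq_nonneg C_M)) (sq_nonneg X)
    have h6 : 0 ≤ lam_m * k * X ^ 2 := by
      have hlk : 0 ≤ lam_m * k := by
        nlinarith [mul_pos hε0 hk0, mul_nonneg hε0.le (sq_nonneg C_M)]
      exact mul_nonneg hlk (sq_nonneg X)
    nlinarith [h1, h2, h3, h4, h5, h6, sq_nonneg X, sq_nonneg Y]
  have := le_of_mul_le_mul_left hkG hk0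
  linarith

set_option maxHeartbeats 2000000 in
/-- Theorem 2 (abstract hypocoercivity): under microscopic coercivity (H1), macroscopic
coercivity (H2), `P T P = 0` (H3) and boundedness of the auxiliary operators (H4), there are
explicit constants `lam > 0` and `C ≥ 1`, depending only on `lam_m, lam_M, C_M`, such that any
solution of `f' = (L - T) f` satisfies `‖f t‖ ≤ C e^{-lam t} ‖f 0‖` for all `t ≥ 0`. -/
theorem stmt_3 {H : Type*} [NormedAddCommGroup H] [InnerProductSpace ℝ H] [CompleteSpace H]
    (L T P A : H →L[ℝ] H) (lam_m lam_M C_M : ℝ)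
    (hlm : 0 < lam_m) (hlM : 0 < lam_M) (hCM : 0 < C_M)
    (hL_sym : ∀ f g, ⟪L f, g⟫ = ⟪f, L g⟫)
    (hT_skew : ∀ f g, ⟪T f, g⟫ = -⟪f, T g⟫)
    (hP_idem : P ∘L P = P)
    (hP_sa : ContinuousLinearMap.adjoint P = P)
    (hP_ker : ∀ f, L (P f) = 0)
    (hP_ker' : ∀ f, L f = 0 → P f = f)
    (hH1 : ∀ f : H, lam_m * ‖f - P f‖ ^ 2 ≤ -⟪L f, f⟫)
    (hH2 : ∀ f : H, lam_M * ‖P f‖ ^ 2 ≤ ‖T (P f)‖ ^ 2)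
    (hH3 : P ∘L (T ∘L P) = 0)
    (hA : (1 + (ContinuousLinearMap.adjoint (T ∘L P)) ∘L (T ∘L P)) ∘L A
        = ContinuousLinearMap.adjoint (T ∘L P))
    (hH4 : ∀ f : H, ‖A (T (f - P f))‖ + ‖A (L f)‖ ≤ C_M * ‖f - P f‖) :
    ∃ lam > (0:ℝ), ∃ C ≥ (1:ℝ), ∀ f : ℝ → H,
      (∀ t : ℝ, HasDerivAt f ((L - T) (f t)) t) →
      ∀ t ≥ (0:ℝ), ‖f t‖ ≤ C * Real.exp (-lam * t) * ‖f 0‖ := by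
  classical
  set B : H →L[ℝ] H := T ∘L P with hBdef
  have hBapp : ∀ x : H, B x = T (P x) := fun x => rfl
  -- basic projection facts
  have hPP : ∀ x : H, P (P x) = P x := fun x => by
    have h := congrArg (fun (M : H →L[ℝ] H) => M x) hP_idem
    simpa using h
  have hPsym : ∀ x y : H, ⟪P x, y⟫ = ⟪x, P y⟫ := fun x y => by
    conv_lhs => rw [← hP_sa]
    exact ContinuousLinearMap.adjoint_inner_left P y x
  have hBadj : ∀ x y : H, ⟪ContinuousLinearMap.adjoint B x, y⟫ = ⟪x, B y⟫ := fun x y =>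
    ContinuousLinearMap.adjoint_inner_left B y x
  have hPBadj : ∀ x : H, P (ContinuousLinearMap.adjoint B x) = ContinuousLinearMap.adjoint B x := by
    intro x
    have h1 : ContinuousLinearMap.adjoint B = P ∘L ContinuousLinearMap.adjoint T := by
      rw [hBdef, ContinuousLinearMap.adjoint_comp, hP_sa]
    rw [h1]
    simpa using hPP (ContinuousLinearMap.adjoint T x)
  have hPTP : ∀ x : H, P (T (P x)) = 0 := fun x => by
    have h := congrArg (fun (M : H →L[ℝ] H) => M x) hH3
    simpa [hBapp] using h
  have hAx : ∀ x : H, A x + ContinuousLinearMap.adjoint B (B (A x))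
      = ContinuousLinearMap.adjoint B x := fun x => by
    have h := congrArg (fun (M : H →L[ℝ] H) => M x) hA
    simpa using h
  have hPA : ∀ x : H, P (A x) = A x := by
    intro x
    have h : A x = ContinuousLinearMap.adjoint B x
        - ContinuousLinearMap.adjoint B (B (A x)) :=
      eq_sub_of_add_eq (hAx x)
    rw [h, map_sub, hPBadj, hPBadj]
  -- Pythagoras
  have hpyth : ∀ g : H, ‖g‖ ^ 2 = ‖g - P g‖ ^ 2 + ‖P g‖ ^ 2 := by
    intro g
    have horth : ⟪g - P g, P g⟫ = 0 := by
      rw [inner_sub_left]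
      have h1 : ⟪P g, P g⟫ = ⟪g, P g⟫ := by rw [hPsym, hPP]
      rw [h1]; ring
    have hdec : g = (g - P g) + P g := by abel
    calc ‖g‖ ^ 2 = ‖(g - P g) + P g‖ ^ 2 := by rw [← hdec]
      _ = ‖g - P g‖ ^ 2 + 2 * ⟪g - P g, P g⟫ + ‖P g‖ ^ 2 := norm_add_sq_real _ _
      _ = ‖g - P g‖ ^ 2 + ‖P g‖ ^ 2 := by rw [horth]; ring
  -- bounds on A and B ∘ A
  have hAbound : ∀ g : H, ‖A g‖ ≤ ‖g - P g‖ / 2 ∧ ‖B (A g)‖ ≤ ‖g - P g‖ := by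
    intro g
    have h1 : ⟪A g, A g⟫ + ⟪B (A g), B (A g)⟫ = ⟪g - P g, B (A g)⟫ := by
      have h : ⟪A g, A g⟫ + ⟪ContinuousLinearMap.adjoint B (B (A g)), A g⟫
          = ⟪ContinuousLinearMap.adjoint B g, A g⟫ := by
        rw [← inner_add_left, hAx g]
      rw [hBadj, hBadj] at h
      have h0 : ⟪P g, B (A g)⟫ = 0 := by
        rw [hPsym, hBapp, hPTP, inner_zero_right]
      rw [inner_sub_left, h0]
      have hcomm : ⟪B (A g), B (A g)⟫ = ⟪B (A g), B (A g)⟫ := rfl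
      linarith [h]
    have hq := real_inner_le_norm (g - P g) (B (A g))
    have ha2 : ⟪A g, A g⟫ = ‖A g‖ ^ 2 := real_inner_self_eq_norm_sq _
    have hq2 : ⟪B (A g), B (A g)⟫ = ‖B (A g)‖ ^ 2 := real_inner_self_eq_norm_sq _
    rw [ha2, hq2] at h1
    constructor
    · nlinarith [norm_nonneg (A g), norm_nonneg (B (A g)), norm_nonneg (g - P g),
        sq_nonneg (‖B (A g)‖ - ‖g - P g‖ / 2)]
    · nlinarith [norm_nonneg (A g), norm_nonneg (B (A g)), norm_nonneg (g - P g),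
        sq_nonneg ‖A g‖]
  -- the constants
  have hden : (0:ℝ) < 1 + lam_M := by linarith
  obtain ⟨k, hk0, hk1, hkdef⟩ : ∃ k : ℝ, 0 < k ∧ k ≤ 1 ∧ k * (1 + lam_M) = lam_M := by
    refine ⟨lam_M / (1 + lam_M), div_pos hlM hden, ?_, div_mul_cancel₀ _ (ne_of_gt hden)⟩
    rw [div_le_one hden]; linarith
  obtain ⟨ε, hε0, hε2, hεb⟩ : ∃ ε : ℝ, 0 < ε ∧ ε ≤ 1 / 2
      ∧ ε * (k + 2 * C_M ^ 2) ≤ lam_m * k / 2 := by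
    refine ⟨min (lam_m * k / (2 * (k + 2 * C_M ^ 2))) (1 / 2), ?_, min_le_right _ _, ?_⟩
    · apply lt_min
      · apply div_pos (mul_pos hlm hk0)
        nlinarith [sq_nonneg C_M, mul_pos hCM hCM]
      · norm_num
    · have h1 : min (lam_m * k / (2 * (k + 2 * C_M ^ 2))) (1 / 2)
          ≤ lam_m * k / (2 * (k + 2 * C_M ^ 2)) := min_le_left _ _
      have h2 : (0:ℝ) < 2 * (k + 2 * C_M ^ 2) := by nlinarith [mul_pos hCM hCM]
      rw [le_div_iff₀ h2] at h1
      nlinarith [h1]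
  -- macroscopic coercivity estimate
  have hmacro : ∀ g : H, k * ‖P g‖ ^ 2 ≤ ⟪A (B g), g⟫ := by
    intro g
    obtain ⟨u, hu⟩ : ∃ u : H, u = A (B g) := ⟨_, rfl⟩
    obtain ⟨w, hw⟩ : ∃ w : H, w = P g - u := ⟨_, rfl⟩
    have hPu : P u = u := by rw [hu]; exact hPA _
    have hPw : P w = w := by rw [hw, map_sub, hPP, hPu]
    have hBPg : B (P g) = B g := by rw [hBapp, hBapp, hPP]
    have hweq : w + ContinuousLinearMap.adjoint B (B w) = P g := by
      rw [hw, hu, map_sub, map_sub, hBPg, ← hAx (B g)]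
      abel
    have hipw : ⟪w, P g⟫ = ⟪w, w⟫ + ⟪B w, B w⟫ := by
      conv_lhs => rw [← hweq]
      rw [inner_add_right]
      congr 1
      rw [real_inner_comm, hBadj]
    have hH2w : lam_M * ‖w‖ ^ 2 ≤ ‖B w‖ ^ 2 := by
      have h := hH2 w
      rw [hPw] at h
      have hBw : B w = T w := by rw [hBapp, hPw]
      rw [hBw]; exact h
    have hww : ⟪w, w⟫ = ‖w‖ ^ 2 := real_inner_self_eq_norm_sq _
    have hBwBw : ⟪B w, B w⟫ = ‖B w‖ ^ 2 := real_inner_self_eq_norm_sq _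
    have hcs := real_inner_le_norm w (P g)
    have hs : (1 + lam_M) * ‖w‖ ^ 2 ≤ ⟪w, P g⟫ := by
      rw [hipw, hww, hBwBw]; linarith
    -- ⟪u, g⟫ = ⟪u, P g⟫ = Y² - ⟪w, P g⟫
    have hug : ⟪u, g⟫ = ⟪P g, P g⟫ - ⟪w, P g⟫ := by
      have h1 : ⟪u, g⟫ = ⟪u, P g⟫ := by
        conv_lhs => rw [← hPu]
        rw [hPsym]
      rw [h1, hw, inner_sub_left]; ring
    have hPgPg : ⟪P g, P g⟫ = ‖P g‖ ^ 2 := real_inner_self_eq_norm_sq _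
    have hwPg_up : ⟪w, P g⟫ * (1 + lam_M) ≤ ‖P g‖ ^ 2 := by
      rcases eq_or_lt_of_le (norm_nonneg w) with hw0 | hw0
      · have hcs0 : ⟪w, P g⟫ ≤ 0 := by
          have h := hcs
          rw [← hw0] at h
          simpa using h
        nlinarith [sq_nonneg ‖P g‖]
      · have hle : (1 + lam_M) * ‖w‖ ≤ ‖P g‖ := by
          have h2 := le_trans hs hcs
          nlinarith [hw0]
        have s1 : ⟪w, P g⟫ * (1 + lam_M) ≤ ‖w‖ * ‖P g‖ * (1 + lam_M) := by
          nlinarith [hcs, hden]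
        have s2 : ‖w‖ * ‖P g‖ * (1 + lam_M) ≤ ‖P g‖ ^ 2 := by
          nlinarith [hle, norm_nonneg (P g)]
        linarith
    rw [← hu, hug, hPgPg]
    have hfin : k * ‖P g‖ ^ 2 * (1 + lam_M) ≤ (‖P g‖ ^ 2 - ⟪w, P g⟫) * (1 + lam_M) := by
      rw [mul_comm k, mul_assoc, hkdef]
      nlinarith [hwPg_up]
    have := le_of_mul_le_mul_right hfin hden
    linarith
  -- auxiliary inner-product identities
  have hAPg : ∀ x g : H, ⟪A x, g⟫ = ⟪A x, P g⟫ := by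
    intro x g
    conv_lhs => rw [← hPA x, hPsym]
  have hEbound : ∀ g : H, |⟪A g, g⟫| ≤ 1 / 2 * ‖g‖ ^ 2 := by
    intro g
    have h1 := (hAbound g).1
    have h2 := abs_real_inner_le_norm (A g) g
    have hXg : ‖g - P g‖ ≤ ‖g‖ := by
      nlinarith [hpyth g, sq_nonneg ‖P g‖, norm_nonneg (g - P g), norm_nonneg g]
    nlinarith [norm_nonneg (A g), norm_nonneg g, norm_nonneg (g - P g)]
  -- the key differential inequality, pointwise in g
  have hkey : ∀ g : H,
      ⟪(L - T) g, g⟫ + ε * (⟪A ((L - T) g), g⟫ + ⟪A g, (L - T) g⟫)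
        ≤ -(ε * k / 2) * (1 / 2 * ⟪g, g⟫ + ε * ⟪A g, g⟫) := by
    intro g
    have hgg : ⟪g, g⟫ = ‖g‖ ^ 2 := real_inner_self_eq_norm_sq _
    have hX : (0:ℝ) ≤ ‖g - P g‖ := norm_nonneg _
    have hY : (0:ℝ) ≤ ‖P g‖ := norm_nonneg _
    have hsub : (L - T) g = L g - T g := rfl
    have hTgg : ⟪T g, g⟫ = 0 := by
      have h1 := hT_skew g g
      have h2 : ⟪g, T g⟫ = ⟪T g, g⟫ := real_inner_comm _ _
      linarith
    have hATg : A (T g) = A (T (P g)) + A (T (g - P g)) := by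
      rw [← map_add]
      congr 1
      rw [map_sub]
      abel
    -- term bounds
    have hLgg : ⟪L g, g⟫ ≤ -(lam_m * ‖g - P g‖ ^ 2) := by linarith [hH1 g]
    have hALn : ‖A (L g)‖ ≤ C_M * ‖g - P g‖ := by
      have := hH4 g
      have := norm_nonneg (A (T (g - P g)))
      linarith
    have hATn : ‖A (T (g - P g))‖ ≤ C_M * ‖g - P g‖ := by
      have := hH4 g
      have := norm_nonneg (A (L g))
      linarith
    have hALg : ⟪A (L g), g⟫ ≤ C_M * ‖g - P g‖ * ‖P g‖ := by
      rw [hAPg]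
      calc ⟪A (L g), P g⟫ ≤ ‖A (L g)‖ * ‖P g‖ := real_inner_le_norm _ _
        _ ≤ C_M * ‖g - P g‖ * ‖P g‖ := by nlinarith [hALn, hY, norm_nonneg (A (L g))]
    have hAT2 : -⟪A (T (g - P g)), g⟫ ≤ C_M * ‖g - P g‖ * ‖P g‖ := by
      rw [hAPg]
      have h1 := abs_real_inner_le_norm (A (T (g - P g))) (P g)
      have h2 := abs_le.mp h1
      nlinarith [hATn, hY, norm_nonneg (A (T (g - P g))), h2.1]
    have hmac : k * ‖P g‖ ^ 2 ≤ ⟪A (T (P g)), g⟫ := by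
      have := hmacro g
      rwa [hBapp] at this
    have hAgLg : ⟪A g, L g⟫ = 0 := by
      have h1 : ⟪L (A g), g⟫ = ⟪A g, L g⟫ := hL_sym (A g) g
      rw [← h1, ← hPA g, hP_ker, inner_zero_left]
    have hAgTg : ⟪A g, T g⟫ = -⟪T (A g), g⟫ := by linarith [hT_skew (A g) g]
    have hTAg : ⟪T (A g), g⟫ ≤ ‖g - P g‖ ^ 2 := by
      have hTA : T (A g) = B (A g) := by rw [hBapp, hPA]
      have h0 : ⟪B (A g), P g⟫ = 0 := by
        rw [← hPsym, hBapp, hPTP, inner_zero_left]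
      have h1 : ⟪B (A g), g⟫ = ⟪B (A g), g - P g⟫ := by
        rw [inner_sub_right, h0]; ring
      calc ⟪T (A g), g⟫ = ⟪B (A g), g - P g⟫ := by rw [hTA, h1]
        _ ≤ ‖B (A g)‖ * ‖g - P g‖ := real_inner_le_norm _ _
        _ ≤ ‖g - P g‖ ^ 2 := by nlinarith [(hAbound g).2, hX, norm_nonneg (B (A g))]
    -- expand the left-hand side
    have hexpand : ⟪(L - T) g, g⟫ + ε * (⟪A ((L - T) g), g⟫ + ⟪A g, (L - T) g⟫)
        = ⟪L g, g⟫ - ⟪T g, g⟫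
          + ε * (⟪A (L g), g⟫ - (⟪A (T (P g)), g⟫ + ⟪A (T (g - P g)), g⟫)
            + (⟪A g, L g⟫ - ⟪A g, T g⟫)) := by
      rw [hsub, inner_sub_left, map_sub, inner_sub_left, hATg, inner_add_left,
        inner_sub_right]
    rw [hexpand, hTgg, hAgLg, hAgTg]
    -- combine everything
    have hquad := quad_aux lam_m C_M k ε ‖g - P g‖ ‖P g‖ hk0 hk1 hε0 hεb hX hY
    have hmain : ⟪L g, g⟫ - 0
        + ε * (⟪A (L g), g⟫ - (⟪A (T (P g)), g⟫ + ⟪A (T (g - P g)), g⟫)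
          + (0 - -⟪T (A g), g⟫))
        ≤ -(ε * k / 2) * (‖g - P g‖ ^ 2 + ‖P g‖ ^ 2) := by
      have b1 := mul_le_mul_of_nonneg_left hALg hε0.le
      have b2 := mul_le_mul_of_nonneg_left hAT2 hε0.le
      have b3 := mul_le_mul_of_nonneg_left hmac hε0.le
      have b4 := mul_le_mul_of_nonneg_left hTAg hε0.le
      nlinarith [hLgg, b1, b2, b3, b4, hquad]
    have hE1 : 1 / 2 * ⟪g, g⟫ + ε * ⟪A g, g⟫ ≤ ‖g - P g‖ ^ 2 + ‖P g‖ ^ 2 := by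
      rw [hgg]
      have h2 := (abs_le.mp (hEbound g)).2
      nlinarith [mul_le_mul_of_nonneg_left h2 hε0.le, hε2, sq_nonneg ‖g‖, hpyth g,
        mul_nonneg hε0.le (sq_nonneg ‖g‖)]
    have hκ : (0:ℝ) ≤ ε * k / 2 := by positivity
    nlinarith [hmain, mul_le_mul_of_nonneg_left hE1 hκ]
  -- choose the constants
  refine ⟨ε * k / 4, by positivity, 2, by norm_num, ?_⟩
  intro f hf t ht
  set κ : ℝ := ε * k / 2 with hκdef
  have hκ0 : (0:ℝ) < κ := by positivity
  set Efn : ℝ → ℝ := fun s => 1 / 2 * ⟪f s, f s⟫ + ε * ⟪A (f s), f s⟫ with hEdef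
  have hfA : ∀ s : ℝ, HasDerivAt (fun r => A (f r)) (A ((L - T) (f s))) s := fun s =>
    A.hasFDerivAt.comp_hasDerivAt s (hf s)
  have hE' : ∀ s : ℝ, HasDerivAt Efn
      (⟪(L - T) (f s), f s⟫
        + ε * (⟪A ((L - T) (f s)), f s⟫ + ⟪A (f s), (L - T) (f s)⟫)) s := by
    intro s
    have h1 := (HasDerivAt.inner ℝ (hf s) (hf s)).const_mul (1 / 2 : ℝ)
    have h2 := (HasDerivAt.inner ℝ (hfA s) (hf s)).const_mul ε
    have h3 := h1.add h2
    convert h3 using 1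
    all_goals try rfl
    rw [real_inner_comm (f s) ((L - T) (f s))]
    ring
  have hGd : ∀ s : ℝ, HasDerivAt (fun r => Efn r * Real.exp (κ * r))
      ((⟪(L - T) (f s), f s⟫
        + ε * (⟪A ((L - T) (f s)), f s⟫ + ⟪A (f s), (L - T) (f s)⟫))
          * Real.exp (κ * s)
        + Efn s * (Real.exp (κ * s) * κ)) s := by
    intro s
    have hg1 : HasDerivAt (fun r : ℝ => Real.exp (κ * r)) (Real.exp (κ * s) * κ) s := by
      simpa using ((hasDerivAt_id s).const_mul κ).exp
    exact (hE' s).mul hg1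
  have hanti : Antitone (fun r => Efn r * Real.exp (κ * r)) := by
    apply antitone_of_deriv_nonpos
    · exact fun s => (hGd s).differentiableAt
    · intro s
      rw [(hGd s).deriv]
      have hk1' := hkey (f s)
      have he := Real.exp_pos (κ * s)
      have hEfn : Efn s = 1 / 2 * ⟪f s, f s⟫ + ε * ⟪A (f s), f s⟫ := rfl
      rw [hEfn]
      nlinarith [hk1', he]
  have hdecay : Efn t * Real.exp (κ * t) ≤ Efn 0 := by
    have h := hanti ht
    simpa using h
  -- norm equivalence of Efn and the squared norm
  have hEl : ∀ g : H, (1 - ε) / 2 * ‖g‖ ^ 2 ≤ 1 / 2 * ⟪g, g⟫ + ε * ⟪A g, g⟫ := by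
    intro g
    have h1 := (abs_le.mp (hEbound g)).1
    rw [real_inner_self_eq_norm_sq]
    nlinarith [mul_le_mul_of_nonneg_left h1 hε0.le, sq_nonneg ‖g‖]
  have hEu : ∀ g : H, 1 / 2 * ⟪g, g⟫ + ε * ⟪A g, g⟫ ≤ (1 + ε) / 2 * ‖g‖ ^ 2 := by
    intro g
    have h1 := (abs_le.mp (hEbound g)).2
    rw [real_inner_self_eq_norm_sq]
    nlinarith [mul_le_mul_of_nonneg_left h1 hε0.le, sq_nonneg ‖g‖]
  have hEt : Efn t ≤ Efn 0 * Real.exp (-(κ * t)) := by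
    have he : Real.exp (κ * t) * Real.exp (-(κ * t)) = 1 := by
      rw [← Real.exp_add]; simp
    have h3 := mul_le_mul_of_nonneg_right hdecay (Real.exp_pos (-(κ * t))).le
    rwa [mul_assoc, he, mul_one] at h3
  have h1ε : (0:ℝ) < 1 - ε := by linarith
  -- final square comparison
  have hsq : ‖f t‖ ^ 2 ≤ (2 * Real.exp (-(ε * k / 4) * t) * ‖f 0‖) ^ 2 := by
    have hexp2 : Real.exp (-(ε * k / 4) * t) ^ 2 = Real.exp (-(κ * t)) := by
      rw [sq, ← Real.exp_add, hκdef]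
      ring_nf
    rw [mul_pow, mul_pow, hexp2]
    have c1 := hEl (f t)
    have c2 : Efn 0 * Real.exp (-(κ * t))
        ≤ (1 + ε) / 2 * ‖f 0‖ ^ 2 * Real.exp (-(κ * t)) :=
      mul_le_mul_of_nonneg_right (hEu (f 0)) (Real.exp_pos _).le
    have c3 : Efn t = 1 / 2 * ⟪f t, f t⟫ + ε * ⟪A (f t), f t⟫ := rfl
    have d1 : (1 - ε) / 2 * ‖f t‖ ^ 2 ≤ (1 + ε) / 2 * ‖f 0‖ ^ 2 * Real.exp (-(κ * t)) := by
      calc (1 - ε) / 2 * ‖f t‖ ^ 2 ≤ Efn t := by rw [c3]; exact c1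
        _ ≤ Efn 0 * Real.exp (-(κ * t)) := hEt
        _ ≤ _ := c2
    have d2 : ‖f t‖ ^ 2 ≤ 3 * (‖f 0‖ ^ 2 * Real.exp (-(κ * t))) := by
      nlinarith [d1, hε2, hε0, sq_nonneg ‖f t‖,
        mul_nonneg (Real.exp_pos (-(κ * t))).le (sq_nonneg ‖f 0‖)]
    nlinarith [d2, mul_nonneg (Real.exp_pos (-(κ * t))).le (sq_nonneg ‖f 0‖)]
  have hR : (0:ℝ) ≤ 2 * Real.exp (-(ε * k / 4) * t) * ‖f 0‖ := by positivity
  calc ‖f t‖ = Real.sqrt (‖f t‖ ^ 2) := (Real.sqrt_sq (norm_nonneg _)).symm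
    _ ≤ Real.sqrt ((2 * Real.exp (-(ε * k / 4) * t) * ‖f 0‖) ^ 2) := Real.sqrt_le_sqrt hsq
    _ = _ := Real.sqrt_sq hR
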